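/- Let n ∈ ℕ with n ≥ 1 and s ∈ ℂ with Re(s) > n + 3/2. Let G_n(s) = ∏_{i ∈ I} ∏_{k ≥ n} (1 − exp(−(k + 1/2)(ℓ i + i·θ i))·exp(−s·ℓ i)) and let R_{ρ_{2n−1}}(s) = ∏_{l=0}^{2n−1} R(2n − 1 − 2l, s − (2n−1)/2 + l). Then Z(2n+1, s − n + 3/2) and Z(−(2n−1), s + n + 3/2) are nonzero, and G_n(s)² · R_{ρ_{2n−1}}(s) = ( Z(2n−1, s − n + 1/2) · Z(−(2n+1), s + n + 1/2) ) / ( Z(2n+1, s − n + 3/2) · Z(−(2n−1), s + n + 3/2) ). -/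

import Mathlib

open Complex Function

namespace Stmt11

noncomputable def EE {I : Type*} (ℓ θ : I → ℝ) (a : ℂ) (b : ℝ) (i : I) : ℂ :=
  -a * (ℓ i : ℂ) + (b : ℂ) * Complex.I * (θ i : ℂ)

lemma EE_re {I : Type*} (ℓ θ : I → ℝ) (a : ℂ) (b : ℝ) (i : I) :
    (EE ℓ θ a b i).re = -a.re * ℓ i := by
  simp [EE, Complex.add_re, Complex.mul_re, Complex.mul_im, Complex.I_re, Complex.I_im,
    Complex.ofReal_re, Complex.ofReal_im, Complex.neg_re, Complex.neg_im]

lemma log_EE_congr {I : Type*} (ℓ θ : I → ℝ) {a a' : ℂ} {b b' : ℝ} (i : I)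
    (hA : a = a') (hB : b = b') :
    Complex.log (1 - Complex.exp (EE ℓ θ a b i))
      = Complex.log (1 - Complex.exp (EE ℓ θ a' b' i)) := by rw [hA, hB]

lemma summable_log_one_sub {J : Type*} {w : J → ℂ} (hw : Summable fun j => ‖w j‖) :
    Summable fun j => Complex.log (1 - w j) := by
  have hev : ∀ᶠ j in Filter.cofinite, ‖w j‖ < 1/2 :=
    hw.tendsto_cofinite_zero.eventually_lt_const (by norm_num)
  have hfin : {j | ¬ ‖w j‖ < 1/2}.Finite := hev
  rw [← hfin.summable_compl_iff]
  apply Summable.of_norm_bounded ((hw.mul_left (3/2)).subtype _)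
  rintro ⟨j, hj⟩
  have hj' : ‖w j‖ < 1/2 := by simpa using hj
  have h := Complex.norm_log_one_add_half_le_self (z := -w j) (by simpa using hj'.le)
  simpa [sub_eq_add_neg] using h

lemma tprod_one_sub_exp {J : Type*} {E : J → ℂ}
    (hw : Summable fun j => ‖Complex.exp (E j)‖) (h1 : ∀ j, (E j).re < 0) :
    (∏' j, (1 - Complex.exp (E j))) =
      Complex.exp (∑' j, Complex.log (1 - Complex.exp (E j))) := by
  have hne : ∀ j, 1 - Complex.exp (E j) ≠ 0 := by
    intro j h
    have h2 : (1 : ℂ) = Complex.exp (E j) := sub_eq_zero.mp h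
    have h3 : ‖Complex.exp (E j)‖ < 1 := by
      rw [Complex.norm_exp]
      exact Real.exp_lt_one_iff.mpr (h1 j)
    rw [← h2] at h3
    simp at h3
  exact (Complex.cexp_tsum_eq_tprod (f := fun j => 1 - Complex.exp (E j))
    (fun j => hne j) (summable_log_one_sub (by simpa using hw))).symm

lemma master {I : Type*} (ℓ : I → ℝ) (hℓ : ∀ i, 0 < ℓ i) {δ : ℝ} (hδ : δ < 2)
    (hsum : Summable fun i => Real.exp (-δ * ℓ i)) :
    Summable fun x : I × ℕ × ℕ => Real.exp (-(2 + x.2.1 + x.2.2) * ℓ x.1) := by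
  have hr0 : ∀ i, 0 < Real.exp (-ℓ i) := fun i => Real.exp_pos _
  have hr1 : ∀ i, Real.exp (-ℓ i) < 1 := fun i =>
    Real.exp_lt_one_iff.mpr (by linarith [hℓ i])
  have hFeq : ∀ (i : I) (y : ℕ × ℕ), Real.exp (-(2 + y.1 + y.2) * ℓ i)
      = Real.exp (-2 * ℓ i) * Real.exp (-ℓ i) ^ y.1 * Real.exp (-ℓ i) ^ y.2 := by
    intro i y
    rw [← Real.exp_nat_mul, ← Real.exp_nat_mul, ← Real.exp_add, ← Real.exp_add]
    exact congrArg Real.exp (by ring)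
  have hgeo : ∀ i, Summable fun p : ℕ => Real.exp (-ℓ i) ^ p := fun i =>
    summable_geometric_of_lt_one (hr0 i).le (hr1 i)
  have hslice : ∀ i, Summable fun y : ℕ × ℕ => Real.exp (-(2 + y.1 + y.2) * ℓ i) := by
    intro i
    apply Summable.congr (f := fun y : ℕ × ℕ =>
      (Real.exp (-2 * ℓ i) * Real.exp (-ℓ i) ^ y.1) * (Real.exp (-ℓ i) ^ y.2))
    · exact ((hgeo i).mul_left _).mul_of_nonneg (hgeo i)
        (fun p => by positivity) (fun q => by positivity)
    · intro y; rw [hFeq i y]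
  have htsum : ∀ i, (∑' y : ℕ × ℕ, Real.exp (-(2 + y.1 + y.2) * ℓ i))
      = Real.exp (-2 * ℓ i) * ((1 - Real.exp (-ℓ i))⁻¹ * (1 - Real.exp (-ℓ i))⁻¹) := by
    intro i
    rw [Summable.tsum_prod' (hslice i) (fun p => by
      apply Summable.congr (f := fun q : ℕ =>
        (Real.exp (-2 * ℓ i) * Real.exp (-ℓ i) ^ p) * Real.exp (-ℓ i) ^ q)
      · exact (hgeo i).mul_left _
      · intro q; rw [hFeq i (p, q)])]
    calc ∑' (p : ℕ), ∑' (q : ℕ), Real.exp (-(2 + p + q) * ℓ i)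
        = ∑' (p : ℕ), (Real.exp (-2 * ℓ i) * Real.exp (-ℓ i) ^ p)
            * (1 - Real.exp (-ℓ i))⁻¹ := by
          refine tsum_congr fun p => ?_
          rw [show (fun q : ℕ => Real.exp (-(2 + p + q) * ℓ i))
              = fun q : ℕ => (Real.exp (-2 * ℓ i) * Real.exp (-ℓ i) ^ p)
                * Real.exp (-ℓ i) ^ q from funext fun q => by rw [hFeq i (p, q)]]
          rw [tsum_mul_left, tsum_geometric_of_lt_one (hr0 i).le (hr1 i)]
      _ = ∑' (p : ℕ), (Real.exp (-2 * ℓ i) * (1 - Real.exp (-ℓ i))⁻¹)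
            * Real.exp (-ℓ i) ^ p := tsum_congr fun p => by ring
      _ = Real.exp (-2 * ℓ i) * ((1 - Real.exp (-ℓ i))⁻¹ * (1 - Real.exp (-ℓ i))⁻¹) := by
          rw [tsum_mul_left, tsum_geometric_of_lt_one (hr0 i).le (hr1 i)]; ring
  rw [summable_prod_of_nonneg (fun x => (Real.exp_pos _).le)]
  refine ⟨hslice, ?_⟩
  rw [show (fun i => ∑' y : ℕ × ℕ, Real.exp (-(2 + y.1 + y.2) * ℓ i))
      = fun i => Real.exp (-2 * ℓ i) * ((1 - Real.exp (-ℓ i))⁻¹ * (1 - Real.exp (-ℓ i))⁻¹)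
      from funext htsum]
  have hev : ∀ᶠ i in Filter.cofinite, Real.exp (-δ * ℓ i) < Real.exp (-2) :=
    hsum.tendsto_cofinite_zero.eventually_lt_const (Real.exp_pos _)
  have hfin : {i : I | ℓ i < 1}.Finite := by
    refine Set.Finite.subset (Filter.eventually_cofinite.mp hev) ?_
    intro i hi hcon
    have hi' : ℓ i < 1 := hi
    have h1 : -2 < -δ * ℓ i := by
      nlinarith [hℓ i, mul_pos (by linarith : (0:ℝ) < 2 - δ) (hℓ i)]
    exact absurd hcon (not_lt.mpr (Real.exp_le_exp.mpr h1.le))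
  rw [← hfin.summable_compl_iff]
  have hC : Summable fun i : ↥{i : I | ℓ i < 1}ᶜ =>
      ((1 - Real.exp (-1 : ℝ))⁻¹ * (1 - Real.exp (-1 : ℝ))⁻¹) * Real.exp (-δ * ℓ i.1) :=
    (hsum.mul_left _).subtype _
  refine Summable.of_nonneg_of_le ?_ ?_ hC
  · rintro ⟨i, hi⟩
    show (0:ℝ) ≤ Real.exp (-2 * ℓ i) * ((1 - Real.exp (-ℓ i))⁻¹ * (1 - Real.exp (-ℓ i))⁻¹)
    have h := hr1 i
    have h2 : (0:ℝ) ≤ (1 - Real.exp (-ℓ i))⁻¹ := inv_nonneg.mpr (by linarith)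
    exact mul_nonneg (Real.exp_pos _).le (mul_nonneg h2 h2)
  rintro ⟨i, hi⟩
  have hge : (1 : ℝ) ≤ ℓ i := not_lt.mp hi
  have he1 : Real.exp (-1 : ℝ) < 1 := Real.exp_lt_one_iff.mpr (by norm_num)
  have hmono : Real.exp (-ℓ i) ≤ Real.exp (-1 : ℝ) := Real.exp_le_exp.mpr (by linarith)
  have hinv : (1 - Real.exp (-ℓ i))⁻¹ ≤ (1 - Real.exp (-1 : ℝ))⁻¹ := by
    apply inv_anti₀ (by linarith) (by linarith)
  have hexp : Real.exp (-2 * ℓ i) ≤ Real.exp (-δ * ℓ i) :=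
    Real.exp_le_exp.mpr (by nlinarith [hℓ i])
  calc Real.exp (-2 * ℓ i) * ((1 - Real.exp (-ℓ i))⁻¹ * (1 - Real.exp (-ℓ i))⁻¹)
      ≤ Real.exp (-δ * ℓ i) * ((1 - Real.exp (-1 : ℝ))⁻¹ * (1 - Real.exp (-1 : ℝ))⁻¹) := by
        have h0 : (0:ℝ) < 1 - Real.exp (-ℓ i) := by linarith [hr1 i]
        have h0' : (0:ℝ) ≤ (1 - Real.exp (-ℓ i))⁻¹ := by positivity
        apply mul_le_mul hexp ?_ (by positivity) (Real.exp_pos _).le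
        exact mul_le_mul hinv hinv h0' (inv_nonneg.mpr (by linarith))
    _ = ((1 - Real.exp (-1 : ℝ))⁻¹ * (1 - Real.exp (-1 : ℝ))⁻¹) * Real.exp (-δ * ℓ i) := by
        ring

lemma tsum_nat_split {X : Type*} (f : X × ℕ → ℂ) (hf : Summable f) (m : ℕ) :
    ∑' x, f x = (∑ l ∈ Finset.range m, ∑' i : X, f (i, l))
      + ∑' x : X × ℕ, f (x.1, x.2 + m) := by
  have hinj : Injective (fun x : X × ℕ => (x.1, x.2 + m)) := by
    rintro ⟨a, b⟩ ⟨c, d⟩ h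
    simp only [Prod.mk.injEq] at h ⊢
    exact ⟨h.1, by omega⟩
  have hshift : Summable fun x : X × ℕ => f (x.1, x.2 + m) := hf.comp_injective hinj
  have hcol : ∀ l : ℕ, Summable fun i : X => f (i, l) := fun l =>
    hf.comp_injective (fun a b h => by
      simpa using congrArg Prod.fst h : Injective fun i : X => (i, l))
  have hfiber : Summable fun i : X => ∑' p : ℕ, f (i, p + m) :=
    ⟨_, hshift.hasSum.prod_fiberwise (fun i => (hshift.prod_factor i).hasSum)⟩
  rw [Summable.tsum_prod' hf hf.prod_factor]
  rw [tsum_congr (fun i => (Summable.sum_add_tsum_nat_add m (hf.prod_factor i)).symm)]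
  rw [Summable.tsum_add (summable_sum fun l _ => hcol l) hfiber]
  rw [Summable.tsum_finsetSum fun l _ => hcol l]
  rw [Summable.tsum_prod' hshift hshift.prod_factor]

lemma family {I : Type*} {ℓ θ : I → ℝ} (hℓ : ∀ i, 0 < ℓ i)
    (hM : Summable fun x : I × ℕ × ℕ => Real.exp (-(2 + x.2.1 + x.2.2) * ℓ x.1))
    {J : Type*} (u : J → I × ℕ × ℕ) (hu : Injective u) (a : J → ℂ) (b : J → ℝ)
    (ha : ∀ j, 2 + ((u j).2.1 : ℝ) + ((u j).2.2 : ℝ) ≤ (a j).re) :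
    Summable (fun j => Complex.log (1 - Complex.exp (EE ℓ θ (a j) (b j) (u j).1)))
    ∧ (∏' j, (1 - Complex.exp (EE ℓ θ (a j) (b j) (u j).1)))
        = Complex.exp (∑' j, Complex.log (1 - Complex.exp (EE ℓ θ (a j) (b j) (u j).1))) := by
  have hnorm : Summable fun j => ‖Complex.exp (EE ℓ θ (a j) (b j) (u j).1)‖ := by
    apply Summable.of_nonneg_of_le (fun _ => norm_nonneg _) ?_ (hM.comp_injective hu)
    intro j
    rw [Complex.norm_exp, EE_re]
    exact Real.exp_le_exp.2 (by nlinarith [hℓ (u j).1, ha j,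
      mul_le_mul_of_nonneg_right (ha j) (hℓ (u j).1).le])
  have h1 : ∀ j, (EE ℓ θ (a j) (b j) (u j).1).re < 0 := by
    intro j
    rw [EE_re]
    have h2 : (0:ℝ) < (a j).re := by
      have := ha j
      have hp : (0:ℝ) ≤ ((u j).2.1 : ℝ) := Nat.cast_nonneg _
      have hq : (0:ℝ) ≤ ((u j).2.2 : ℝ) := Nat.cast_nonneg _
      linarith
    nlinarith [hℓ (u j).1]
  exact ⟨summable_log_one_sub hnorm, tprod_one_sub_exp hnorm h1⟩

end Stmt11

/-- `R(σ_k, s) = ∏_{i ∈ I} (1 − e^{i(k/2)θ_i} e^{−s ℓ_i})`. -/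
noncomputable def Rz {I : Type*} (ℓ θ : I → ℝ) (k : ℤ) (s : ℂ) : ℂ :=
  ∏' i : I, (1 - Complex.exp (Complex.I * ((k : ℂ) / 2) * (θ i : ℂ))
    * Complex.exp (-s * (ℓ i : ℂ)))

/-- Selberg zeta function
`Z(σ_k, s) = ∏_{i ∈ I} ∏_{p,q ≥ 0} (1 − e^{i(k/2)θ_i} e^{−p(ℓ_i+iθ_i)} e^{−q(ℓ_i−iθ_i)} e^{−s ℓ_i})`. -/
noncomputable def Zs {I : Type*} (ℓ θ : I → ℝ) (k : ℤ) (s : ℂ) : ℂ :=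
  ∏' x : I × ℕ × ℕ,
    (1 - Complex.exp (Complex.I * ((k : ℂ) / 2) * (θ x.1 : ℂ))
       * Complex.exp (-(x.2.1 : ℂ) * ((ℓ x.1 : ℂ) + Complex.I * (θ x.1 : ℂ)))
       * Complex.exp (-(x.2.2 : ℂ) * ((ℓ x.1 : ℂ) - Complex.I * (θ x.1 : ℂ)))
       * Complex.exp (-s * (ℓ x.1 : ℂ)))

namespace Stmt11

noncomputable def ZL {I : Type*} (ℓ θ : I → ℝ) (s : ℂ) (k : ℤ) (c : ℝ)
    (x : I × ℕ × ℕ) : ℂ :=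
  Complex.log (1 - Complex.exp (EE ℓ θ (s + ((c + x.2.1 + x.2.2 : ℝ) : ℂ))
    ((k : ℝ)/2 - x.2.1 + x.2.2) x.1))

noncomputable def RL {I : Type*} (ℓ θ : I → ℝ) (s : ℂ) (k : ℤ) (c : ℝ) (i : I) : ℂ :=
  Complex.log (1 - Complex.exp (EE ℓ θ (s + (c : ℂ)) ((k : ℝ)/2) i))

noncomputable def Glog {I : Type*} (ℓ θ : I → ℝ) (s : ℂ) (n : ℕ)
    (x : I × {k : ℕ // n ≤ k}) : ℂ :=
  Complex.log (1 - Complex.exp (EE ℓ θ (s + ((((x.2 : ℕ) : ℝ) + 1/2 : ℝ) : ℂ))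
    (-(((x.2 : ℕ) : ℝ) + 1/2)) x.1))

lemma Zs_exp {I : Type*} {ℓ θ : I → ℝ} (hℓ : ∀ i, 0 < ℓ i)
    (hM : Summable fun x : I × ℕ × ℕ => Real.exp (-(2 + x.2.1 + x.2.2) * ℓ x.1))
    (s σ : ℂ) (k : ℤ) (c : ℝ) (hc : 2 ≤ s.re + c) (hσ : σ = s + (c : ℂ)) :
    Summable (ZL ℓ θ s k c)
    ∧ Zs ℓ θ k σ = Complex.exp (∑' x, ZL ℓ θ s k c x) := by
  have h := family (θ := θ) hℓ hM (u := id (α := I × ℕ × ℕ)) injective_id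
    (a := fun x => s + ((c + x.2.1 + x.2.2 : ℝ) : ℂ))
    (b := fun x => (k : ℝ)/2 - x.2.1 + x.2.2)
    (fun x => by
      simp only [Complex.add_re, Complex.ofReal_re, id]
      push_cast
      linarith [Nat.cast_nonneg (α := ℝ) x.2.1, Nat.cast_nonneg (α := ℝ) x.2.2])
  have e1 : Zs ℓ θ k σ = ∏' x : I × ℕ × ℕ,
      (1 - Complex.exp (EE ℓ θ (s + ((c + x.2.1 + x.2.2 : ℝ) : ℂ))
        ((k : ℝ)/2 - x.2.1 + x.2.2) x.1)) := by
    unfold Zs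
    refine tprod_congr fun x => ?_
    rw [hσ, ← Complex.exp_add, ← Complex.exp_add, ← Complex.exp_add]
    congr 2
    simp only [EE]
    push_cast
    ring
  exact ⟨h.1, by rw [e1]; exact h.2⟩

lemma Rz_exp {I : Type*} {ℓ θ : I → ℝ} (hℓ : ∀ i, 0 < ℓ i)
    (hM : Summable fun x : I × ℕ × ℕ => Real.exp (-(2 + x.2.1 + x.2.2) * ℓ x.1))
    (s σ : ℂ) (k : ℤ) (c : ℝ) (hc : 2 ≤ s.re + c) (hσ : σ = s + (c : ℂ)) :
    Summable (RL ℓ θ s k c)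
    ∧ Rz ℓ θ k σ = Complex.exp (∑' i, RL ℓ θ s k c i) := by
  have h := family (θ := θ) hℓ hM (u := fun i : I => (i, 0, 0))
    (fun a b h => by simpa using congrArg Prod.fst h)
    (a := fun _ => s + (c : ℂ)) (b := fun _ => (k : ℝ)/2)
    (fun i => by simp only [Complex.add_re, Complex.ofReal_re]; push_cast; linarith)
  have e1 : Rz ℓ θ k σ = ∏' i : I,
      (1 - Complex.exp (EE ℓ θ (s + (c : ℂ)) ((k : ℝ)/2) i)) := by
    unfold Rz
    refine tprod_congr fun i => ?_
    rw [hσ, ← Complex.exp_add]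
    congr 2
    simp only [EE]
    push_cast
    ring
  exact ⟨h.1, by rw [e1]; exact h.2⟩

lemma G_exp {I : Type*} {ℓ θ : I → ℝ} (hℓ : ∀ i, 0 < ℓ i)
    (hM : Summable fun x : I × ℕ × ℕ => Real.exp (-(2 + x.2.1 + x.2.2) * ℓ x.1))
    (s : ℂ) (hs2 : (3/2 : ℝ) ≤ s.re) (n : ℕ) :
    Summable (Glog ℓ θ s n)
    ∧ (∏' x : I × {k : ℕ // n ≤ k},
        (1 - Complex.exp (-(((x.2 : ℕ) : ℂ) + 1 / 2) * ((ℓ x.1 : ℂ) + Complex.I * (θ x.1 : ℂ)))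
           * Complex.exp (-s * (ℓ x.1 : ℂ))))
        = Complex.exp (∑' x, Glog ℓ θ s n x) := by
  have h := family (θ := θ) hℓ hM (u := fun x : I × {k : ℕ // n ≤ k} => (x.1, (x.2 : ℕ), 0))
    (by
      rintro ⟨i, k⟩ ⟨i', k'⟩ h
      simp only [Prod.mk.injEq] at h
      exact Prod.ext h.1 (Subtype.ext h.2.1))
    (a := fun x => s + ((((x.2 : ℕ) : ℝ) + 1/2 : ℝ) : ℂ))
    (b := fun x => -(((x.2 : ℕ) : ℝ) + 1/2))
    (fun x => by
      simp only [Complex.add_re, Complex.ofReal_re]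
      push_cast
      linarith [Nat.cast_nonneg (α := ℝ) (x.2 : ℕ)])
  have e1 : (∏' x : I × {k : ℕ // n ≤ k},
      (1 - Complex.exp (-(((x.2 : ℕ) : ℂ) + 1 / 2) * ((ℓ x.1 : ℂ) + Complex.I * (θ x.1 : ℂ)))
        * Complex.exp (-s * (ℓ x.1 : ℂ))))
      = ∏' x : I × {k : ℕ // n ≤ k},
        (1 - Complex.exp (EE ℓ θ (s + ((((x.2 : ℕ) : ℝ) + 1/2 : ℝ) : ℂ))
          (-(((x.2 : ℕ) : ℝ) + 1/2)) x.1)) := by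
    refine tprod_congr fun x => ?_
    rw [← Complex.exp_add]
    congr 2
    simp only [EE]
    push_cast
    ring
  exact ⟨h.1, by rw [e1]; exact h.2⟩

noncomputable def prodSubEquiv (I : Type*) (n : ℕ) : I × ℕ ≃ I × {k : ℕ // n ≤ k} where
  toFun x := (x.1, ⟨n + x.2, Nat.le_add_right n x.2⟩)
  invFun y := (y.1, (y.2 : ℕ) - n)
  left_inv := by rintro ⟨i, m⟩; simp
  right_inv := by rintro ⟨i, k, hk⟩; simp [Nat.add_sub_cancel' hk]

end Stmt11


namespace Stmt11
section Helpers

variable {I : Type*} (ℓ θ : I → ℝ) (s : ℂ)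

lemma Glog_mk (n : ℕ) (i : I) (k : ℕ) (h : n ≤ k) :
    Glog ℓ θ s n (i, ⟨k, h⟩)
      = Complex.log (1 - Complex.exp (EE ℓ θ (s + (((k : ℝ) + 1/2 : ℝ) : ℂ))
          (-((k : ℝ) + 1/2)) i)) := rfl

/-- shift identity: the `q+1` term of `Z(k, s+c)` is the `q` term of `Z(k+2, s+c+1)`. -/
lemma ZL_shift (k k' : ℤ) (c c' : ℝ) (hk : k' = k + 2) (hc : c' = c + 1)
    (i : I) (p q : ℕ) :
    ZL ℓ θ s k c (i, p, q + 1) = ZL ℓ θ s k' c' (i, p, q) := by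
  unfold ZL
  exact log_EE_congr ℓ θ i (by rw [hc]; push_cast; ring) (by rw [hk]; push_cast; ring)

/-- `q = 0, p = l` slice of `Z(2n-1, ·)` is an `R`-term. -/
lemma ZL_slice_R (n : ℕ) (l : ℕ) (i : I) :
    ZL ℓ θ s (2*(n:ℤ)-1) (1/2 - (n:ℝ)) (i, l, 0)
      = RL ℓ θ s (2*(n:ℤ)-1-2*(l:ℤ)) (1/2 - (n:ℝ) + l) i := by
  unfold ZL RL
  exact log_EE_congr ℓ θ i (by push_cast; ring) (by push_cast; ring)

/-- `q = 0, p = m + 2n` slice of `Z(2n-1, ·)` is a `G`-term. -/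
lemma ZL_slice_G1 (n : ℕ) (i : I) (m : ℕ) :
    ZL ℓ θ s (2*(n:ℤ)-1) (1/2 - (n:ℝ)) (i, m + 2*n, 0)
      = Glog ℓ θ s n (i, ⟨n + m, Nat.le_add_right n m⟩) := by
  rw [Glog_mk]
  unfold ZL
  exact log_EE_congr ℓ θ i (by push_cast; ring) (by push_cast; ring)

/-- `q = 0` slice of `Z(-(2n+1), ·)` is a `G`-term. -/
lemma ZL_slice_G2 (n : ℕ) (i : I) (m : ℕ) :
    ZL ℓ θ s (-(2*(n:ℤ)+1)) ((n:ℝ) + 1/2) (i, m, 0)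
      = Glog ℓ θ s n (i, ⟨n + m, Nat.le_add_right n m⟩) := by
  rw [Glog_mk]
  unfold ZL
  exact log_EE_congr ℓ θ i (by push_cast; ring) (by push_cast; ring)

lemma tsum_assoc (f : I × ℕ × ℕ → ℂ) :
    ∑' x, f x = ∑' y : (I × ℕ) × ℕ, f (y.1.1, y.1.2, y.2) :=
  ((Equiv.prodAssoc I ℕ ℕ).tsum_eq f).symm.trans (tsum_congr fun ⟨⟨i, p⟩, q⟩ => rfl)

lemma tsum_subEquiv (n : ℕ) (f : I × {k : ℕ // n ≤ k} → ℂ) :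
    (∑' x : I × ℕ, f (x.1, ⟨n + x.2, Nat.le_add_right n x.2⟩)) = ∑' z, f z :=
  (tsum_congr fun ⟨i, m⟩ => rfl).trans ((prodSubEquiv I n).tsum_eq f)

end Helpers
end Stmt11

open Stmt11 in
/-- `G_n(s)² R_{ρ_{2n−1}}(s)` as a ratio of four Selberg zeta values. -/
theorem statement11 {I : Type*} [Countable I] (ℓ θ : I → ℝ)
    (hℓ : ∀ i, 0 < ℓ i) (δ : ℝ) (hδ : δ < 2)
    (hsum : Summable fun i => Real.exp (-δ * ℓ i))
    (n : ℕ) (hn : 1 ≤ n) (s : ℂ) (hs : (n : ℝ) + 3 / 2 < s.re) :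
    Zs ℓ θ (2 * (n : ℤ) + 1) (s - (n : ℂ) + 3 / 2) ≠ 0 ∧
    Zs ℓ θ (-(2 * (n : ℤ) - 1)) (s + (n : ℂ) + 3 / 2) ≠ 0 ∧
    (∏' x : I × {k : ℕ // n ≤ k},
        (1 - Complex.exp (-(((x.2 : ℕ) : ℂ) + 1 / 2) * ((ℓ x.1 : ℂ) + Complex.I * (θ x.1 : ℂ)))
           * Complex.exp (-s * (ℓ x.1 : ℂ)))) ^ 2 *
      (∏ l ∈ Finset.range (2 * n),
        Rz ℓ θ (2 * (n : ℤ) - 1 - 2 * (l : ℤ)) (s - (2 * (n : ℂ) - 1) / 2 + (l : ℂ))) =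
      (Zs ℓ θ (2 * (n : ℤ) - 1) (s - (n : ℂ) + 1 / 2) *
          Zs ℓ θ (-(2 * (n : ℤ) + 1)) (s + (n : ℂ) + 1 / 2)) /
      (Zs ℓ θ (2 * (n : ℤ) + 1) (s - (n : ℂ) + 3 / 2) *
          Zs ℓ θ (-(2 * (n : ℤ) - 1)) (s + (n : ℂ) + 3 / 2)) := by
  have hM := Stmt11.master ℓ hℓ hδ hsum
  have hn1 : (1:ℝ) ≤ (n:ℝ) := by exact_mod_cast hn
  obtain ⟨hS1, hE1⟩ := Zs_exp (θ := θ) hℓ hM s (s - (n:ℂ) + 1/2) (2*(n:ℤ)-1) (1/2 - (n:ℝ))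
    (by linarith) (by push_cast; ring)
  obtain ⟨hS2, hE2⟩ := Zs_exp (θ := θ) hℓ hM s (s + (n:ℂ) + 1/2) (-(2*(n:ℤ)+1)) ((n:ℝ) + 1/2)
    (by linarith) (by push_cast; ring)
  obtain ⟨hS3, hE3⟩ := Zs_exp (θ := θ) hℓ hM s (s - (n:ℂ) + 3/2) (2*(n:ℤ)+1) (3/2 - (n:ℝ))
    (by linarith) (by push_cast; ring)
  obtain ⟨hS4, hE4⟩ := Zs_exp (θ := θ) hℓ hM s (s + (n:ℂ) + 3/2) (-(2*(n:ℤ)-1)) ((n:ℝ) + 3/2)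
    (by linarith) (by push_cast; ring)
  obtain ⟨hSG, hEG⟩ := G_exp (θ := θ) hℓ hM s (by linarith) n
  have hR : ∀ l : ℕ, Summable (RL ℓ θ s (2*(n:ℤ)-1-2*(l:ℤ)) (1/2 - (n:ℝ) + l))
      ∧ Rz ℓ θ (2*(n:ℤ)-1-2*(l:ℤ)) (s - (2*(n:ℂ)-1)/2 + (l:ℂ))
        = Complex.exp (∑' i, RL ℓ θ s (2*(n:ℤ)-1-2*(l:ℤ)) (1/2 - (n:ℝ) + l) i) := by
    intro l
    refine Rz_exp (θ := θ) hℓ hM s _ _ _ ?_ (by push_cast; ring)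
    have h0 : (0:ℝ) ≤ (l:ℝ) := Nat.cast_nonneg l
    linarith
  -- C = G + E
  have hCE : (∑' x, ZL ℓ θ s (-(2*(n:ℤ)+1)) ((n:ℝ) + 1/2) x)
      = (∑' x, Glog ℓ θ s n x)
        + ∑' x, ZL ℓ θ s (-(2*(n:ℤ)-1)) ((n:ℝ) + 3/2) x := by
    have hassoc : Summable (fun y : (I × ℕ) × ℕ =>
        ZL ℓ θ s (-(2*(n:ℤ)+1)) ((n:ℝ) + 1/2) (y.1.1, y.1.2, y.2)) := by
      have := hS2.comp_injective (Equiv.prodAssoc I ℕ ℕ).injective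
      exact this.congr fun ⟨⟨i, p⟩, q⟩ => rfl
    have eslice : (∑' x : I × ℕ,
        ZL ℓ θ s (-(2*(n:ℤ)+1)) ((n:ℝ) + 1/2) (x.1, x.2, 0))
        = ∑' x, Glog ℓ θ s n x := by
      rw [← tsum_subEquiv n (Glog ℓ θ s n)]
      exact tsum_congr fun x => ZL_slice_G2 ℓ θ s n x.1 x.2
    have eshift : (∑' y : (I × ℕ) × ℕ,
        ZL ℓ θ s (-(2*(n:ℤ)+1)) ((n:ℝ) + 1/2) (y.1.1, y.1.2, y.2 + 1))
        = ∑' x, ZL ℓ θ s (-(2*(n:ℤ)-1)) ((n:ℝ) + 3/2) x := by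
      rw [tsum_assoc (f := ZL ℓ θ s (-(2*(n:ℤ)-1)) ((n:ℝ) + 3/2))]
      exact tsum_congr fun y =>
        ZL_shift ℓ θ s _ _ _ _ (by ring) (by ring) y.1.1 y.1.2 y.2
    rw [tsum_assoc (f := ZL ℓ θ s (-(2*(n:ℤ)+1)) ((n:ℝ) + 1/2)),
      tsum_nat_split (fun y : (I × ℕ) × ℕ =>
        ZL ℓ θ s (-(2*(n:ℤ)+1)) ((n:ℝ) + 1/2) (y.1.1, y.1.2, y.2)) hassoc 1,
      Finset.sum_range_one, eslice, eshift]
  -- B = (R-sum + G) + D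
  have hBD : (∑' x, ZL ℓ θ s (2*(n:ℤ)-1) (1/2 - (n:ℝ)) x)
      = ((∑ l ∈ Finset.range (2*n),
            ∑' i, RL ℓ θ s (2*(n:ℤ)-1-2*(l:ℤ)) (1/2 - (n:ℝ) + l) i)
          + ∑' x, Glog ℓ θ s n x)
        + ∑' x, ZL ℓ θ s (2*(n:ℤ)+1) (3/2 - (n:ℝ)) x := by
    have hassoc : Summable (fun y : (I × ℕ) × ℕ =>
        ZL ℓ θ s (2*(n:ℤ)-1) (1/2 - (n:ℝ)) (y.1.1, y.1.2, y.2)) := by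
      have := hS1.comp_injective (Equiv.prodAssoc I ℕ ℕ).injective
      exact this.congr fun ⟨⟨i, p⟩, q⟩ => rfl
    have hT : Summable (fun x : I × ℕ =>
        ZL ℓ θ s (2*(n:ℤ)-1) (1/2 - (n:ℝ)) (x.1, x.2, 0)) := by
      have hinj : Function.Injective (fun x : I × ℕ => ((x.1, x.2, 0) : I × ℕ × ℕ)) := by
        rintro ⟨a, b⟩ ⟨c, d⟩ h
        simp only [Prod.mk.injEq] at h
        exact Prod.ext h.1 h.2.1
      exact (hS1.comp_injective hinj).congr fun ⟨i, p⟩ => rfl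
    have eshift : (∑' y : (I × ℕ) × ℕ,
        ZL ℓ θ s (2*(n:ℤ)-1) (1/2 - (n:ℝ)) (y.1.1, y.1.2, y.2 + 1))
        = ∑' x, ZL ℓ θ s (2*(n:ℤ)+1) (3/2 - (n:ℝ)) x := by
      rw [tsum_assoc (f := ZL ℓ θ s (2*(n:ℤ)+1) (3/2 - (n:ℝ)))]
      exact tsum_congr fun y =>
        ZL_shift ℓ θ s _ _ _ _ (by ring) (by ring) y.1.1 y.1.2 y.2
    have eR : (∑ l ∈ Finset.range (2*n),
        ∑' i : I, ZL ℓ θ s (2*(n:ℤ)-1) (1/2 - (n:ℝ)) (i, l, 0))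
        = ∑ l ∈ Finset.range (2*n),
            ∑' i, RL ℓ θ s (2*(n:ℤ)-1-2*(l:ℤ)) (1/2 - (n:ℝ) + l) i :=
      Finset.sum_congr rfl fun l _ => tsum_congr fun i => ZL_slice_R ℓ θ s n l i
    have eG : (∑' x : I × ℕ,
        ZL ℓ θ s (2*(n:ℤ)-1) (1/2 - (n:ℝ)) (x.1, x.2 + 2*n, 0))
        = ∑' x, Glog ℓ θ s n x := by
      rw [← tsum_subEquiv n (Glog ℓ θ s n)]
      exact tsum_congr fun x => ZL_slice_G1 ℓ θ s n x.1 x.2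
    rw [tsum_assoc (f := ZL ℓ θ s (2*(n:ℤ)-1) (1/2 - (n:ℝ))),
      tsum_nat_split (fun y : (I × ℕ) × ℕ =>
        ZL ℓ θ s (2*(n:ℤ)-1) (1/2 - (n:ℝ)) (y.1.1, y.1.2, y.2)) hassoc 1,
      Finset.sum_range_one, eshift,
      tsum_nat_split (fun x : I × ℕ =>
        ZL ℓ θ s (2*(n:ℤ)-1) (1/2 - (n:ℝ)) (x.1, x.2, 0)) hT (2*n),
      eR, eG]
  refine ⟨by rw [hE3]; exact Complex.exp_ne_zero _,
    by rw [hE4]; exact Complex.exp_ne_zero _, ?_⟩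
  rw [hE1, hE2, hE3, hE4, hEG,
    Finset.prod_congr rfl (fun l _ => (hR l).2), ← Complex.exp_sum]
  rw [sq, ← Complex.exp_add, ← Complex.exp_add, ← Complex.exp_add, ← Complex.exp_add,
    ← Complex.exp_sub]
  congr 1
  rw [hBD, hCE]
  ring
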